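/- Let P be a polynomial on ℝ^d, B ⊂ ℚ^d finite, and suppose there exist constants 0 < c₁ < c₂ and exponents δ_for < δ_bac in (0,∞) and integers a, b ≥ 0 such that for all k ∈ ℤ: c₁·2^{k/δ_for}(|k|+1)^a ≤ |{x ∈ D_B : |P(x)| ≤ 2^k}| ≤ c₂·2^{k/δ_for}(|k|+1)^a when 2^k < 1, and c₁·2^{k/δ_bac}(|k|+1)^b ≤ |{x ∈ D_B : |P(x)| ≤ 2^k}| ≤ c₂·2^{k/δ_bac}(|k|+1)^b when 2^k ≥ 1. Then for ρ > 0, the integral ∫_{D_B} |P(x)|^{−ρ} dx is finite if and only if 1/δ_bac < ρ < 1/δ_for. -/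

import Mathlib

set_option maxHeartbeats 1000000

open Finset Real MeasureTheory
open scoped ENNReal NNReal

/-- `|x^b| = ∏_ν |x_ν|^{b_ν}`. -/
noncomputable def monAbs {d : ℕ} (x b : Fin d → ℝ) : ℝ := ∏ ν, |x ν| ^ (b ν)

/-- `D_S`. -/
noncomputable def Dom {d : ℕ} (S : Set (Fin d → ℝ)) : Set (Fin d → ℝ) :=
  {x | ∀ b ∈ S, monAbs x b ≤ 1}

private lemma measurable_abs_rpow (q : ℝ) : Measurable fun t : ℝ => |t| ^ q := by
  have heq : (fun t : ℝ => |t| ^ q) = fun t =>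
      if t = 0 then (if q = 0 then 1 else 0) else Real.exp (Real.log |t| * q) := by
    funext t
    by_cases ht : t = 0
    · subst ht
      simp only [abs_zero, if_pos rfl]
      by_cases hq : q = 0
      · simp [hq]
      · simp [hq, Real.zero_rpow hq]
    · rw [if_neg ht, Real.rpow_def_of_pos (abs_pos.2 ht)]
  rw [heq]
  exact Measurable.ite (measurableSet_eq_fun measurable_id measurable_const)
    measurable_const
    (Real.measurable_exp.comp ((Real.measurable_log.comp measurable_abs).mul measurable_const))


private lemma two_rpow_mul_nat (s : ℝ) (n : ℕ) : (2:ℝ) ^ (s * n) = ((2:ℝ) ^ s) ^ n := by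
  rw [Real.rpow_mul (by norm_num : (0:ℝ) ≤ 2), Real.rpow_natCast]

private lemma sumAux (e : ℕ) (c : ℝ) (hc : 1 ≤ c) {r : ℝ} (hr0 : 0 < r) (hr1 : r < 1) :
    Summable (fun n : ℕ => ((n : ℝ) + c) ^ e * r ^ n) := by
  have h : Summable (fun n : ℕ => (n : ℝ) ^ e * r ^ n) :=
    summable_pow_mul_geometric_of_norm_lt_one e
      (by rw [Real.norm_eq_abs, abs_of_pos hr0]; exact hr1)
  have h2 : Summable (fun n : ℕ => ((n + 1 : ℕ) : ℝ) ^ e * r ^ (n + 1)) :=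
    (summable_nat_add_iff 1).2 h
  have h3 : Summable (fun n : ℕ => ((n : ℝ) + 1) ^ e * r ^ n) := by
    refine (h2.mul_left r⁻¹).congr fun n => ?_
    have : ((n + 1 : ℕ) : ℝ) = (n : ℝ) + 1 := by push_cast; ring
    rw [this, pow_succ]
    field_simp
  refine Summable.of_nonneg_of_le (fun n => by positivity) (fun n => ?_) (h3.mul_left (c ^ e))
  have hb : (n : ℝ) + c ≤ c * ((n : ℝ) + 1) := by nlinarith [Nat.cast_nonneg (α := ℝ) n]
  have hp : ((n : ℝ) + c) ^ e ≤ (c * ((n : ℝ) + 1)) ^ e :=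
    pow_le_pow_left₀ (by positivity) hb e
  calc ((n : ℝ) + c) ^ e * r ^ n ≤ (c * ((n : ℝ) + 1)) ^ e * r ^ n := by
        exact mul_le_mul_of_nonneg_right hp (by positivity)
      _ = c ^ e * (((n : ℝ) + 1) ^ e * r ^ n) := by rw [mul_pow]; ring

private lemma core {α : Type*} [MeasureSpace α] (F : α → ℝ) (hFm : Measurable F)
    (D : Set α) (hD : MeasurableSet D)
    (c₁ c₂ δf δb : ℝ) (hc₁ : 0 < c₁) (hc₂ : 0 < c₂)
    (hδf : 0 < δf) (hδb : 0 < δb) (a b : ℕ)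
    (hlow : ∀ k : ℤ, k < 0 →
      ENNReal.ofReal (c₁ * (2:ℝ) ^ ((k:ℝ) / δf) * (|(k:ℝ)| + 1) ^ a)
          ≤ volume {x ∈ D | F x ≤ (2:ℝ) ^ (k:ℝ)} ∧
        volume {x ∈ D | F x ≤ (2:ℝ) ^ (k:ℝ)}
          ≤ ENNReal.ofReal (c₂ * (2:ℝ) ^ ((k:ℝ) / δf) * (|(k:ℝ)| + 1) ^ a))
    (hhigh : ∀ k : ℤ, 0 ≤ k →
      ENNReal.ofReal (c₁ * (2:ℝ) ^ ((k:ℝ) / δb) * (|(k:ℝ)| + 1) ^ b)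
          ≤ volume {x ∈ D | F x ≤ (2:ℝ) ^ (k:ℝ)} ∧
        volume {x ∈ D | F x ≤ (2:ℝ) ^ (k:ℝ)}
          ≤ ENNReal.ofReal (c₂ * (2:ℝ) ^ ((k:ℝ) / δb) * (|(k:ℝ)| + 1) ^ b))
    (ρ : ℝ) (hρ : 0 < ρ) :
    (∫⁻ x in D, (ENNReal.ofReal (F x)) ^ (-ρ)) ≠ ⊤ ↔ (1 / δb < ρ ∧ ρ < 1 / δf) := by
  have h2 : (1:ℝ) < 2 := one_lt_two
  set f : α → ℝ≥0∞ := fun x => (ENNReal.ofReal (F x)) ^ (-ρ) with hf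
  set S : ℤ → Set α := fun k => {x ∈ D | F x ≤ (2:ℝ) ^ (k:ℝ)} with hS
  have hSm : ∀ k, MeasurableSet (S k) := fun k =>
    hD.inter (measurableSet_le hFm measurable_const)
  have hSmono : ∀ {j k : ℤ}, j ≤ k → S j ⊆ S k := by
    intro j k hjk x hx
    exact ⟨hx.1, hx.2.trans (Real.rpow_le_rpow_of_exponent_le h2.le (by exact_mod_cast hjk))⟩
  set A : ℤ → Set α := fun k => S k \ S (k - 1) with hA
  have hAm : ∀ k, MeasurableSet (A k) := fun k => (hSm k).diff (hSm (k - 1))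
  have hAmem : ∀ (k : ℤ) (x : α), x ∈ A k ↔
      x ∈ D ∧ F x ≤ (2:ℝ) ^ (k:ℝ) ∧ (2:ℝ) ^ ((k:ℝ) - 1) < F x := by
    intro k x
    have hcast : (((k - 1 : ℤ)) : ℝ) = (k:ℝ) - 1 := by push_cast; ring
    constructor
    · rintro ⟨⟨h1, h2'⟩, h3⟩
      refine ⟨h1, h2', ?_⟩
      by_contra h4
      push_neg at h4
      refine h3 ?_
      simp only [hS, Set.mem_setOf_eq]
      exact ⟨h1, by rw [hcast]; exact h4⟩
    · rintro ⟨h1, h2', h3⟩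
      refine ⟨⟨h1, h2'⟩, fun hx => ?_⟩
      have : F x ≤ (2:ℝ) ^ (((k - 1 : ℤ)) : ℝ) := by
        have h' : x ∈ S (k - 1) := hx
        simp only [hS, Set.mem_setOf_eq] at h'
        exact h'.2
      rw [hcast] at this
      exact absurd this (not_le.2 h3)
  have hApos : ∀ (k : ℤ) (x : α), x ∈ A k → 0 < F x := fun k x hx =>
    lt_trans (Real.rpow_pos_of_pos two_pos _) ((hAmem k x).1 hx).2.2
  have hAdisj : Pairwise (Function.onFun Disjoint A) := by
    have key : ∀ {j k : ℤ}, j < k → Disjoint (A j) (A k) := by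
      intro j k hjk
      rw [Set.disjoint_left]
      intro x hxj hxk
      obtain ⟨_, hle, _⟩ := (hAmem j x).1 hxj
      obtain ⟨_, _, hgt⟩ := (hAmem k x).1 hxk
      have hjk' : (j:ℝ) ≤ (k:ℝ) - 1 := by
        have : (j:ℝ) + 1 ≤ (k:ℝ) := by exact_mod_cast hjk
        linarith
      exact absurd (hle.trans (Real.rpow_le_rpow_of_exponent_le h2.le hjk')) (not_le.2 hgt)
    intro j k hjk
    rcases lt_or_gt_of_ne hjk with h | h
    · exact key h
    · exact (key h).symm
  set Cub : ℤ → ℝ := fun k => if k < 0 then c₂ * (2:ℝ) ^ ((k:ℝ) / δf) * (|(k:ℝ)| + 1) ^ a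
      else c₂ * (2:ℝ) ^ ((k:ℝ) / δb) * (|(k:ℝ)| + 1) ^ b with hCub
  set Clb : ℤ → ℝ := fun k => if k < 0 then c₁ * (2:ℝ) ^ ((k:ℝ) / δf) * (|(k:ℝ)| + 1) ^ a
      else c₁ * (2:ℝ) ^ ((k:ℝ) / δb) * (|(k:ℝ)| + 1) ^ b with hClb
  have hub : ∀ k : ℤ, volume (S k) ≤ ENNReal.ofReal (Cub k) := by
    intro k
    by_cases hk : k < 0
    · simp only [hS, hCub, if_pos hk]; exact (hlow k hk).2
    · simp only [hS, hCub, if_neg hk]; exact (hhigh k (not_lt.1 hk)).2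
  have hlb : ∀ k : ℤ, ENNReal.ofReal (Clb k) ≤ volume (S k) := by
    intro k
    by_cases hk : k < 0
    · simp only [hS, hClb, if_pos hk]; exact (hlow k hk).1
    · simp only [hS, hClb, if_neg hk]; exact (hhigh k (not_lt.1 hk)).1
  set Z : Set α := D ∩ {x | F x ≤ 0} with hZdef
  have hZD : Z ⊆ D := Set.inter_subset_left
  have hZS : ∀ k : ℤ, Z ⊆ S k := fun k x hx =>
    ⟨hx.1, hx.2.trans (Real.rpow_pos_of_pos two_pos _).le⟩
  have hCubneg : ∀ n : ℕ, Cub (-(n + 1 : ℕ)) =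
      (c₂ * (2:ℝ) ^ (-(1 / δf))) * (((n:ℝ) + 2) ^ a * ((2:ℝ) ^ (-(1 / δf))) ^ n) := by
    intro n
    have hneg : (-(n + 1 : ℕ) : ℤ) < 0 := by omega
    have h1 : (((-(n + 1 : ℕ) : ℤ)) : ℝ) = -((n:ℝ) + 1) := by push_cast; ring
    have habs : |(-((n:ℝ) + 1))| = (n:ℝ) + 1 := by
      rw [abs_neg, abs_of_nonneg (by positivity)]
    simp only [hCub, if_pos hneg, h1, habs]
    rw [show (-((n:ℝ) + 1)) / δf = (-(1 / δf)) + (-(1 / δf)) * (n:ℝ) by ring]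
    rw [Real.rpow_add two_pos, two_rpow_mul_nat]
    ring
  have hZ : volume Z = 0 := by
    have hbound : ∀ n : ℕ, volume Z ≤ ENNReal.ofReal (Cub (-(n + 1 : ℕ))) := fun n =>
      (measure_mono (hZS _)).trans (hub _)
    have hr0 : (0:ℝ) < (2:ℝ) ^ (-(1 / δf)) := Real.rpow_pos_of_pos two_pos _
    have hr1 : (2:ℝ) ^ (-(1 / δf)) < 1 :=
      Real.rpow_lt_one_of_one_lt_of_neg h2 (by rw [neg_lt_zero]; positivity)
    have t1 : Filter.Tendsto (fun n : ℕ => ((n:ℝ) + 2) ^ a * ((2:ℝ) ^ (-(1 / δf))) ^ n)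
        Filter.atTop (nhds 0) := (sumAux a 2 one_le_two hr0 hr1).tendsto_atTop_zero
    have t2 := t1.const_mul (c₂ * (2:ℝ) ^ (-(1 / δf)))
    rw [mul_zero] at t2
    have t3 : Filter.Tendsto (fun n : ℕ => ENNReal.ofReal (Cub (-(n + 1 : ℕ))))
        Filter.atTop (nhds 0) := by
      have := (ENNReal.tendsto_ofReal (t2.congr fun n => (hCubneg n).symm))
      rwa [ENNReal.ofReal_zero] at this
    exact le_antisymm (ge_of_tendsto t3 (Filter.Eventually.of_forall hbound)) (zero_le)
  have hcover : ∀ x, x ∈ D → 0 < F x → ∃ k : ℤ, x ∈ A k := by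
    intro x hxD hx0
    have hle1 : F x ≤ (2:ℝ) ^ ((⌈Real.logb 2 (F x)⌉ : ℝ)) := by
      conv_lhs => rw [← Real.rpow_logb two_pos (by norm_num) hx0]
      exact Real.rpow_le_rpow_of_exponent_le h2.le (Int.le_ceil _)
    have hgt1 : (2:ℝ) ^ ((⌈Real.logb 2 (F x)⌉ : ℝ) - 1) < F x := by
      conv_rhs => rw [← Real.rpow_logb two_pos (by norm_num) hx0]
      apply Real.rpow_lt_rpow_of_exponent_lt h2
      have := Int.ceil_lt_add_one (Real.logb 2 (F x))
      linarith
    exact ⟨⌈Real.logb 2 (F x)⌉, (hAmem _ x).2 ⟨hxD, hle1, hgt1⟩⟩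
  have hDZ : D \ Z = ⋃ k, A k := by
    ext x
    simp only [Set.mem_diff, Set.mem_iUnion]
    constructor
    · rintro ⟨hxD, hxZ⟩
      have hx0 : 0 < F x := by
        by_contra h
        exact hxZ ⟨hxD, le_of_not_gt h⟩
      exact hcover x hxD hx0
    · rintro ⟨k, hk⟩
      obtain ⟨hxD, _, hgt⟩ := (hAmem k x).1 hk
      exact ⟨hxD, fun hxZ =>
        absurd hxZ.2 (not_le.2 (lt_trans (Real.rpow_pos_of_pos two_pos _) hgt))⟩
  have hdecomp : ∫⁻ x in D, f x = ∑' k : ℤ, ∫⁻ x in A k, f x := by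
    have e1 : ∫⁻ x in D, f x = ∫⁻ x in D \ Z, f x := by
      refine le_antisymm ?_ (lintegral_mono_set Set.diff_subset)
      calc ∫⁻ x in D, f x ≤ ∫⁻ x in (D \ Z) ∪ Z, f x := by
            refine lintegral_mono_set fun x hx => ?_
            by_cases hxZ : x ∈ Z
            · exact Or.inr hxZ
            · exact Or.inl ⟨hx, hxZ⟩
        _ ≤ (∫⁻ x in D \ Z, f x) + ∫⁻ x in Z, f x := lintegral_union_le _ _ _
        _ = ∫⁻ x in D \ Z, f x := by rw [setLIntegral_measure_zero _ _ hZ, add_zero]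
    rw [e1, hDZ, lintegral_iUnion hAm hAdisj]
  have hup : ∀ k : ℤ, ∫⁻ x in A k, f x ≤
      ENNReal.ofReal ((2:ℝ) ^ (-ρ * ((k:ℝ) - 1))) * volume (S k) := by
    intro k
    have step : ∫⁻ x in A k, f x ≤
        ∫⁻ _ in A k, ENNReal.ofReal ((2:ℝ) ^ (-ρ * ((k:ℝ) - 1))) := by
      refine setLIntegral_mono' (hAm k) fun x hx => ?_
      obtain ⟨hxD, hxle, hxgt⟩ := (hAmem k x).1 hx
      have hx0 : 0 < F x := lt_trans (Real.rpow_pos_of_pos two_pos _) hxgt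
      show (ENNReal.ofReal (F x)) ^ (-ρ) ≤ _
      rw [ENNReal.ofReal_rpow_of_pos hx0]
      apply ENNReal.ofReal_le_ofReal
      calc F x ^ (-ρ) ≤ ((2:ℝ) ^ ((k:ℝ) - 1)) ^ (-ρ) :=
            Real.rpow_le_rpow_of_nonpos (Real.rpow_pos_of_pos two_pos _) hxgt.le
              (neg_nonpos.2 hρ.le)
        _ = (2:ℝ) ^ (-ρ * ((k:ℝ) - 1)) := by
            rw [← Real.rpow_mul (by norm_num : (0:ℝ) ≤ 2)]; ring_nf
    calc ∫⁻ x in A k, f x ≤ _ := step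
      _ = ENNReal.ofReal ((2:ℝ) ^ (-ρ * ((k:ℝ) - 1))) * volume (A k) := setLIntegral_const _ _
      _ ≤ ENNReal.ofReal ((2:ℝ) ^ (-ρ * ((k:ℝ) - 1))) * volume (S k) := by
          refine mul_le_mul_right (measure_mono ?_) _
          simp only [hA]
          exact Set.diff_subset
  have hdn : ∀ k : ℤ, ENNReal.ofReal ((2:ℝ) ^ (-ρ * (k:ℝ))) * volume (A k) ≤
      ∫⁻ x in A k, f x := by
    intro k
    rw [← setLIntegral_const (A k) (ENNReal.ofReal ((2:ℝ) ^ (-ρ * (k:ℝ))))]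
    refine setLIntegral_mono' (hAm k) fun x hx => ?_
    obtain ⟨hxD, hxle, hxgt⟩ := (hAmem k x).1 hx
    have hx0 : 0 < F x := lt_trans (Real.rpow_pos_of_pos two_pos _) hxgt
    show _ ≤ (ENNReal.ofReal (F x)) ^ (-ρ)
    rw [ENNReal.ofReal_rpow_of_pos hx0]
    apply ENNReal.ofReal_le_ofReal
    calc (2:ℝ) ^ (-ρ * (k:ℝ)) = ((2:ℝ) ^ ((k:ℝ))) ^ (-ρ) := by
          rw [← Real.rpow_mul (by norm_num : (0:ℝ) ≤ 2)]; ring_nf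
      _ ≤ F x ^ (-ρ) := Real.rpow_le_rpow_of_nonpos hx0 hxle (neg_nonpos.2 hρ.le)
  set q : ℝ≥0∞ := ENNReal.ofReal ((2:ℝ) ^ (-ρ)) with hq
  have hq1 : q < 1 := by
    rw [hq]
    exact ENNReal.ofReal_lt_one.2 (Real.rpow_lt_one_of_one_lt_of_neg h2 (neg_lt_zero.2 hρ))
  have hqT : (1 - q)⁻¹ ≠ ⊤ := by
    rw [Ne, ENNReal.inv_eq_top, tsub_eq_zero_iff_le]
    exact not_le.2 hq1
  have hv : ∀ k : ℤ, volume (S k) = ∑' j : ℤ, (if j ≤ k then volume (A j) else 0) := by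
    intro k
    have e1 : volume (S k) = volume (S k \ Z) := (measure_diff_null hZ).symm
    have e2 : S k \ Z = ⋃ j : ℤ, (A j ∩ S k) := by
      ext x
      simp only [Set.mem_diff, Set.mem_iUnion, Set.mem_inter_iff]
      constructor
      · rintro ⟨hxS, hxZ⟩
        have hx0 : 0 < F x := by
          by_contra h
          exact hxZ ⟨hxS.1, le_of_not_gt h⟩
        obtain ⟨j, hj⟩ := hcover x hxS.1 hx0
        exact ⟨j, hj, hxS⟩
      · rintro ⟨j, hjA, hjS⟩
        obtain ⟨hxD, _, hgt⟩ := (hAmem j x).1 hjA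
        exact ⟨hjS, fun hxZ => absurd hxZ.2
          (not_le.2 (lt_trans (Real.rpow_pos_of_pos two_pos _) hgt))⟩
    have e3 : volume (⋃ j : ℤ, (A j ∩ S k)) = ∑' j : ℤ, volume (A j ∩ S k) :=
      measure_iUnion
        (hAdisj.mono fun i j h => h.mono Set.inter_subset_left Set.inter_subset_left)
        (fun j => (hAm j).inter (hSm k))
    rw [e1, e2, e3]
    refine tsum_congr fun j => ?_
    by_cases hjk : j ≤ k
    · rw [if_pos hjk, Set.inter_eq_self_of_subset_left
        (fun x hx => hSmono hjk (Set.diff_subset hx))]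
    · rw [if_neg hjk]
      have hempty : A j ∩ S k = ∅ := by
        ext x
        simp only [Set.mem_inter_iff, Set.mem_empty_iff_false, iff_false, not_and]
        intro hxA hxS
        obtain ⟨_, _, hgt⟩ := (hAmem j x).1 hxA
        have hk1 : (k:ℝ) ≤ (j:ℝ) - 1 := by
          have h' : k + 1 ≤ j := by omega
          have h'' : (k:ℝ) + 1 ≤ (j:ℝ) := by exact_mod_cast h'
          linarith
        exact absurd hxS.2 (not_le.2 (lt_of_le_of_lt
          (Real.rpow_le_rpow_of_exponent_le h2.le hk1) hgt))
      rw [hempty, measure_empty]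
  have hGsum : ∑' k : ℤ, (ENNReal.ofReal ((2:ℝ) ^ (-ρ * (k:ℝ))) * volume (S k))
      ≤ (1 - q)⁻¹ * ∫⁻ x in D, f x := by
    have step1 : ∀ k : ℤ, ENNReal.ofReal ((2:ℝ) ^ (-ρ * (k:ℝ))) * volume (S k)
        = ∑' j : ℤ, (if j ≤ k then ENNReal.ofReal ((2:ℝ) ^ (-ρ * (k:ℝ))) * volume (A j)
            else 0) := by
      intro k
      rw [hv k, ← ENNReal.tsum_mul_left]
      exact tsum_congr fun j => by rw [mul_ite, mul_zero]
    calc ∑' k : ℤ, (ENNReal.ofReal ((2:ℝ) ^ (-ρ * (k:ℝ))) * volume (S k))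
        = ∑' k : ℤ, ∑' j : ℤ, (if j ≤ k then
            ENNReal.ofReal ((2:ℝ) ^ (-ρ * (k:ℝ))) * volume (A j) else 0) :=
          tsum_congr step1
      _ = ∑' j : ℤ, ∑' k : ℤ, (if j ≤ k then
            ENNReal.ofReal ((2:ℝ) ^ (-ρ * (k:ℝ))) * volume (A j) else 0) :=
          ENNReal.tsum_comm
      _ = ∑' j : ℤ, (1 - q)⁻¹ * (ENNReal.ofReal ((2:ℝ) ^ (-ρ * (j:ℝ))) * volume (A j)) := by
          refine tsum_congr fun j => ?_
          have hinj : Function.Injective (fun i : ℕ => j + (i : ℤ)) := by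
            intro i1 i2 h
            simpa using h
          have hsupp : Function.support
              (fun k : ℤ => if j ≤ k then
                ENNReal.ofReal ((2:ℝ) ^ (-ρ * (k:ℝ))) * volume (A j) else 0)
              ⊆ Set.range (fun i : ℕ => j + (i : ℤ)) := by
            intro k hk
            by_cases hjk : j ≤ k
            · exact ⟨(k - j).toNat, by simp; omega⟩
            · rw [Function.mem_support, if_neg hjk] at hk
              exact absurd rfl hk
          rw [← hinj.tsum_eq hsupp]
          have hterm : ∀ i : ℕ, (if j ≤ j + (i : ℤ) then
              ENNReal.ofReal ((2:ℝ) ^ (-ρ * (((j + (i : ℤ)) : ℤ) : ℝ))) * volume (A j) else 0)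
              = (ENNReal.ofReal ((2:ℝ) ^ (-ρ * (j:ℝ))) * volume (A j)) * q ^ i := by
            intro i
            rw [if_pos (by omega)]
            have e1 : (2:ℝ) ^ (-ρ * (((j + (i : ℤ)) : ℤ) : ℝ))
                = (2:ℝ) ^ (-ρ * (j:ℝ)) * ((2:ℝ) ^ (-ρ)) ^ i := by
              push_cast
              rw [show -ρ * ((j:ℝ) + (i:ℝ)) = -ρ * (j:ℝ) + (-ρ) * (i:ℝ) by ring,
                Real.rpow_add two_pos, two_rpow_mul_nat]
            rw [e1, ENNReal.ofReal_mul (Real.rpow_nonneg (by norm_num) _),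
              ENNReal.ofReal_pow (Real.rpow_nonneg (by norm_num) _), ← hq]
            ring
          rw [tsum_congr hterm, ENNReal.tsum_mul_left, ENNReal.tsum_geometric]
          ring
      _ = (1 - q)⁻¹ * ∑' j : ℤ, (ENNReal.ofReal ((2:ℝ) ^ (-ρ * (j:ℝ))) * volume (A j)) :=
          ENNReal.tsum_mul_left
      _ ≤ (1 - q)⁻¹ * ∑' j : ℤ, ∫⁻ x in A j, f x :=
          mul_le_mul_right (ENNReal.tsum_le_tsum hdn) _
      _ = (1 - q)⁻¹ * ∫⁻ x in D, f x := by rw [hdecomp]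
  constructor
  · intro hfin
    have hGne : ∑' k : ℤ, (ENNReal.ofReal ((2:ℝ) ^ (-ρ * (k:ℝ))) * volume (S k)) ≠ ⊤ :=
      (lt_of_le_of_lt hGsum
        (ENNReal.mul_lt_top hqT.lt_top (lt_top_iff_ne_top.2 hfin))).ne
    have hG0 := ENNReal.tendsto_cofinite_zero_of_tsum_ne_top hGne
    have hfinite : {k : ℤ | ¬ (ENNReal.ofReal ((2:ℝ) ^ (-ρ * (k:ℝ))) * volume (S k)
        < ENNReal.ofReal c₁)}.Finite :=
      Filter.eventually_cofinite.1 (hG0.eventually_lt_const (ENNReal.ofReal_pos.2 hc₁))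
    have hged : ∀ k : ℤ, c₁ ≤ (2:ℝ) ^ (-ρ * (k:ℝ)) * Clb k →
        ¬ (ENNReal.ofReal ((2:ℝ) ^ (-ρ * (k:ℝ))) * volume (S k) < ENNReal.ofReal c₁) := by
      intro k hk
      rw [not_lt]
      calc ENNReal.ofReal c₁ ≤ ENNReal.ofReal ((2:ℝ) ^ (-ρ * (k:ℝ)) * Clb k) :=
            ENNReal.ofReal_le_ofReal hk
        _ = ENNReal.ofReal ((2:ℝ) ^ (-ρ * (k:ℝ))) * ENNReal.ofReal (Clb k) :=
            ENNReal.ofReal_mul (Real.rpow_nonneg (by norm_num) _)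
        _ ≤ _ := mul_le_mul_right (hlb k) _
    constructor
    · by_contra hcon
      push_neg at hcon
      have hsub : Set.Ici (0:ℤ) ⊆ {k : ℤ | ¬ (ENNReal.ofReal ((2:ℝ) ^ (-ρ * (k:ℝ)))
          * volume (S k) < ENNReal.ofReal c₁)} := by
        intro k hk0
        have hk0' : (0:ℤ) ≤ k := hk0
        refine hged k ?_
        have hnneg : ¬ (k < 0) := not_lt.2 hk0'
        have hClbk : Clb k = c₁ * (2:ℝ) ^ ((k:ℝ)/δb) * (|(k:ℝ)| + 1) ^ b := by
          simp only [hClb, if_neg hnneg]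
        rw [hClbk, show (2:ℝ) ^ (-ρ * (k:ℝ)) * (c₁ * (2:ℝ) ^ ((k:ℝ)/δb) * (|(k:ℝ)| + 1) ^ b)
            = c₁ * ((2:ℝ) ^ (-ρ * (k:ℝ)) * (2:ℝ) ^ ((k:ℝ)/δb)) * (|(k:ℝ)| + 1) ^ b by ring,
          ← Real.rpow_add two_pos]
        have g1 : (1:ℝ) ≤ (2:ℝ) ^ (-ρ * (k:ℝ) + (k:ℝ)/δb) := by
          refine Real.one_le_rpow h2.le ?_
          have hkr : (0:ℝ) ≤ (k:ℝ) := by exact_mod_cast hk0'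
          have : -ρ * (k:ℝ) + (k:ℝ)/δb = (1/δb - ρ) * (k:ℝ) := by ring
          rw [this]
          exact mul_nonneg (by linarith) hkr
        have g2 : (1:ℝ) ≤ (|(k:ℝ)| + 1) ^ b :=
          one_le_pow₀ (by linarith [abs_nonneg ((k:ℝ))])
        calc c₁ = c₁ * 1 * 1 := by ring
          _ ≤ c₁ * (2:ℝ) ^ (-ρ * (k:ℝ) + (k:ℝ)/δb) * (|(k:ℝ)| + 1) ^ b := by
              gcongr <;> positivity
      exact absurd hfinite (Set.Infinite.mono hsub (Set.Ici_infinite (0:ℤ)))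
    · by_contra hcon
      push_neg at hcon
      have hsub : Set.Iio (0:ℤ) ⊆ {k : ℤ | ¬ (ENNReal.ofReal ((2:ℝ) ^ (-ρ * (k:ℝ)))
          * volume (S k) < ENNReal.ofReal c₁)} := by
        intro k hk0
        have hk0' : k < 0 := hk0
        refine hged k ?_
        have hClbk : Clb k = c₁ * (2:ℝ) ^ ((k:ℝ)/δf) * (|(k:ℝ)| + 1) ^ a := by
          simp only [hClb, if_pos hk0']
        rw [hClbk, show (2:ℝ) ^ (-ρ * (k:ℝ)) * (c₁ * (2:ℝ) ^ ((k:ℝ)/δf) * (|(k:ℝ)| + 1) ^ a)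
            = c₁ * ((2:ℝ) ^ (-ρ * (k:ℝ)) * (2:ℝ) ^ ((k:ℝ)/δf)) * (|(k:ℝ)| + 1) ^ a by ring,
          ← Real.rpow_add two_pos]
        have g1 : (1:ℝ) ≤ (2:ℝ) ^ (-ρ * (k:ℝ) + (k:ℝ)/δf) := by
          refine Real.one_le_rpow h2.le ?_
          have hkr : (k:ℝ) ≤ 0 := by exact_mod_cast hk0'.le
          have : -ρ * (k:ℝ) + (k:ℝ)/δf = (1/δf - ρ) * (k:ℝ) := by ring
          rw [this]
          have h1f : 1/δf - ρ ≤ 0 := by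
            have : 1/δf ≤ ρ := hcon
            linarith
          nlinarith
        have g2 : (1:ℝ) ≤ (|(k:ℝ)| + 1) ^ a :=
          one_le_pow₀ (by linarith [abs_nonneg ((k:ℝ))])
        calc c₁ = c₁ * 1 * 1 := by ring
          _ ≤ c₁ * (2:ℝ) ^ (-ρ * (k:ℝ) + (k:ℝ)/δf) * (|(k:ℝ)| + 1) ^ a := by
              gcongr <;> positivity
      exact absurd hfinite (Set.Infinite.mono hsub (Set.Iio_infinite (0:ℤ)))
  · rintro ⟨hb1, hf1⟩
    set H : ℤ → ℝ := fun k => (2:ℝ) ^ (-ρ * ((k:ℝ) - 1)) * Cub k with hH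
    have hCubnn : ∀ k : ℤ, 0 ≤ Cub k := by
      intro k
      simp only [hCub]
      by_cases hk : k < 0
      · rw [if_pos hk]; positivity
      · rw [if_neg hk]; positivity
    have hHnn : ∀ k : ℤ, 0 ≤ H k := fun k =>
      mul_nonneg (Real.rpow_nonneg (by norm_num) _) (hCubnn k)
    have hrb0 : (0:ℝ) < (2:ℝ) ^ (1/δb - ρ) := Real.rpow_pos_of_pos two_pos _
    have hrb1 : (2:ℝ) ^ (1/δb - ρ) < 1 :=
      Real.rpow_lt_one_of_one_lt_of_neg h2 (by linarith)
    have hrf0 : (0:ℝ) < (2:ℝ) ^ (ρ - 1/δf) := Real.rpow_pos_of_pos two_pos _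
    have hrf1 : (2:ℝ) ^ (ρ - 1/δf) < 1 :=
      Real.rpow_lt_one_of_one_lt_of_neg h2 (by linarith)
    have hsumnat : Summable (fun n : ℕ => H (n : ℤ)) := by
      refine ((sumAux b 1 le_rfl hrb0 hrb1).mul_left (c₂ * (2:ℝ) ^ ρ)).congr fun n => ?_
      have hnn : ¬ ((n:ℤ) < 0) := by omega
      simp only [hH, hCub, if_neg hnn]
      push_cast
      rw [abs_of_nonneg (Nat.cast_nonneg n)]
      calc c₂ * (2:ℝ) ^ ρ * (((n:ℝ) + 1) ^ b * ((2:ℝ) ^ (1/δb - ρ)) ^ n)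
          = c₂ * ((n:ℝ) + 1) ^ b * ((2:ℝ) ^ ρ * (2:ℝ) ^ ((1/δb - ρ) * (n:ℝ))) := by
            rw [← two_rpow_mul_nat]; ring
        _ = c₂ * ((n:ℝ) + 1) ^ b * (2:ℝ) ^ (ρ + (1/δb - ρ) * (n:ℝ)) := by
            rw [← Real.rpow_add two_pos]
        _ = c₂ * ((n:ℝ) + 1) ^ b * (2:ℝ) ^ (-ρ * ((n:ℝ) - 1) + (n:ℝ)/δb) := by
            rw [show ρ + (1/δb - ρ) * (n:ℝ) = -ρ * ((n:ℝ) - 1) + (n:ℝ)/δb by ring]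
        _ = c₂ * ((n:ℝ) + 1) ^ b * ((2:ℝ) ^ (-ρ * ((n:ℝ) - 1)) * (2:ℝ) ^ ((n:ℝ)/δb)) := by
            rw [Real.rpow_add two_pos]
        _ = (2:ℝ) ^ (-ρ * ((n:ℝ) - 1)) * (c₂ * (2:ℝ) ^ ((n:ℝ)/δb) * ((n:ℝ) + 1) ^ b) := by
            ring
    have hsumneg : Summable (fun n : ℕ => H (-(n:ℤ))) := by
      have key : Summable (fun n : ℕ => H (-((n + 1 : ℕ) : ℤ))) := by
        refine ((sumAux a 2 one_le_two hrf0 hrf1).mul_left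
          (c₂ * (2:ℝ) ^ (2*ρ - 1/δf))).congr fun n => ?_
        have hcast2 : (((-((n + 1 : ℕ) : ℤ)) : ℤ) : ℝ) = -((n:ℝ) + 1) := by push_cast; ring
        simp only [hH]
        rw [hCubneg n, hcast2]
        calc c₂ * (2:ℝ) ^ (2*ρ - 1/δf) * (((n:ℝ) + 2) ^ a * ((2:ℝ) ^ (ρ - 1/δf)) ^ n)
            = c₂ * ((n:ℝ) + 2) ^ a
                * ((2:ℝ) ^ (2*ρ - 1/δf) * (2:ℝ) ^ ((ρ - 1/δf) * (n:ℝ))) := by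
              rw [← two_rpow_mul_nat]; ring
          _ = c₂ * ((n:ℝ) + 2) ^ a * (2:ℝ) ^ ((2*ρ - 1/δf) + (ρ - 1/δf) * (n:ℝ)) := by
              rw [← Real.rpow_add two_pos]
          _ = c₂ * ((n:ℝ) + 2) ^ a
                * (2:ℝ) ^ (-ρ * (-((n:ℝ) + 1) - 1) + (-(1/δf) + (-(1/δf)) * (n:ℝ))) := by
              rw [show (2*ρ - 1/δf) + (ρ - 1/δf) * (n:ℝ)
                = -ρ * (-((n:ℝ) + 1) - 1) + (-(1/δf) + (-(1/δf)) * (n:ℝ)) by ring]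
          _ = c₂ * ((n:ℝ) + 2) ^ a * ((2:ℝ) ^ (-ρ * (-((n:ℝ) + 1) - 1))
                * ((2:ℝ) ^ (-(1/δf)) * (2:ℝ) ^ ((-(1/δf)) * (n:ℝ)))) := by
              rw [Real.rpow_add two_pos, Real.rpow_add two_pos]
          _ = (2:ℝ) ^ (-ρ * (-((n:ℝ) + 1) - 1)) * (c₂ * (2:ℝ) ^ (-(1/δf))
                * (((n:ℝ) + 2) ^ a * ((2:ℝ) ^ (-(1/δf))) ^ n)) := by
              rw [two_rpow_mul_nat]; ring
      exact (summable_nat_add_iff 1).1 (key.congr fun n => by push_cast; ring_nf)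
    have hHsum : Summable H := Summable.of_nat_of_neg hsumnat hsumneg
    have hbound : ∫⁻ x in D, f x ≤ ENNReal.ofReal (∑' k : ℤ, H k) := by
      rw [hdecomp]
      calc ∑' k : ℤ, ∫⁻ x in A k, f x
          ≤ ∑' k : ℤ, ENNReal.ofReal (H k) := by
            refine ENNReal.tsum_le_tsum fun k => ?_
            refine (hup k).trans ?_
            simp only [hH]
            rw [ENNReal.ofReal_mul (Real.rpow_nonneg (by norm_num) _)]
            exact mul_le_mul_right (hub k) _
        _ = ENNReal.ofReal (∑' k : ℤ, H k) :=
            (ENNReal.ofReal_tsum_of_nonneg hHnn hHsum).symm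
    exact (lt_of_le_of_lt hbound ENNReal.ofReal_lt_top).ne

/-- Two-sided sublevel-set bounds for `(P, D_B)` with exponents `δ_for < δ_bac` imply that
`∫_{D_B} |P|^{-ρ}` is finite iff `1/δ_bac < ρ < 1/δ_for`. -/
theorem statement17 (d : ℕ) (P : MvPolynomial (Fin d) ℝ) (B : Finset (Fin d → ℝ))
    (hB : ∀ b ∈ B, ∀ ν, ∃ s : ℚ, b ν = (s : ℝ))
    (c₁ c₂ δf δb : ℝ) (hc₁ : 0 < c₁) (hc₁₂ : c₁ < c₂)
    (hδf : 0 < δf) (hδ : δf < δb) (a b : ℕ)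
    (hlow : ∀ k : ℤ, k < 0 →
      ENNReal.ofReal (c₁ * (2:ℝ) ^ ((k:ℝ) / δf) * (|(k:ℝ)| + 1) ^ a)
          ≤ volume {x ∈ Dom (↑B : Set (Fin d → ℝ)) |
              |MvPolynomial.eval x P| ≤ (2:ℝ) ^ (k:ℝ)} ∧
        volume {x ∈ Dom (↑B : Set (Fin d → ℝ)) |
              |MvPolynomial.eval x P| ≤ (2:ℝ) ^ (k:ℝ)}
          ≤ ENNReal.ofReal (c₂ * (2:ℝ) ^ ((k:ℝ) / δf) * (|(k:ℝ)| + 1) ^ a))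
    (hhigh : ∀ k : ℤ, 0 ≤ k →
      ENNReal.ofReal (c₁ * (2:ℝ) ^ ((k:ℝ) / δb) * (|(k:ℝ)| + 1) ^ b)
          ≤ volume {x ∈ Dom (↑B : Set (Fin d → ℝ)) |
              |MvPolynomial.eval x P| ≤ (2:ℝ) ^ (k:ℝ)} ∧
        volume {x ∈ Dom (↑B : Set (Fin d → ℝ)) |
              |MvPolynomial.eval x P| ≤ (2:ℝ) ^ (k:ℝ)}
          ≤ ENNReal.ofReal (c₂ * (2:ℝ) ^ ((k:ℝ) / δb) * (|(k:ℝ)| + 1) ^ b))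
    (ρ : ℝ) (hρ : 0 < ρ) :
    (∫⁻ x in Dom (↑B : Set (Fin d → ℝ)),
        (ENNReal.ofReal |MvPolynomial.eval x P|) ^ (-ρ)) ≠ ⊤
      ↔ (1 / δb < ρ ∧ ρ < 1 / δf) := by
  have hFm : Measurable fun x : Fin d → ℝ => |MvPolynomial.eval x P| :=
    (MvPolynomial.continuous_eval (p := P)).measurable.abs
  have hD : MeasurableSet (Dom (↑B : Set (Fin d → ℝ))) := by
    have hDeq : Dom (↑B : Set (Fin d → ℝ)) =
        ⋂ bb ∈ (B : Set (Fin d → ℝ)), {x | monAbs x bb ≤ 1} := by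
      ext x; simp [Dom]
    rw [hDeq]
    refine MeasurableSet.biInter B.countable_toSet fun bb _ => ?_
    refine measurableSet_le ?_ measurable_const
    exact Finset.measurable_prod _ fun ν _ =>
      (measurable_abs_rpow (bb ν)).comp (measurable_pi_apply ν)
  exact core _ hFm _ hD c₁ c₂ δf δb hc₁ (hc₁.trans hc₁₂) hδf (hδf.trans hδ) a b
    hlow hhigh ρ hρ
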